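/- arXiv:1311.6727 — 2 statements merged into one kernel-verified Lean document; each statement's English description precedes it below -/
import Mathlib

section
/- Let H = {u ∈ L²([0,2π], ℝ^d) : ∫₀^{2π} u = 0}, A ∈ so(d), and Q : H → H the self-adjoint operator with ⟨u, Qu⟩ = (1/2)∫₀^{2π} ⟨∫₀^t u(τ)dτ, A u(t)⟩ dt. For each k ≥ 1, the subspace T_k = ℝ^d ⊗ span{cos kt, sin kt} is invariant under Q, and in the orthonormal basis {e_i (1/√π)cos kt, e_i (1/√π)sin kt} the matrix of Q|_{T_k} is (1/k) times the 2d×2d block matrix with blocks [[0, A/2], [-A/2, 0]]. -/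
open Matrix MeasureTheory Real

/-- The quadratic/bilinear pairing `q(u,v) = (1/2)∫₀^{2π} ⟨∫₀^t u, A v(t)⟩ dt` associated to a
skew-symmetric matrix `A` (the Hessian of the endpoint map of a step-two Carnot group). -/
noncomputable def qForm {d : ℕ} (A : Matrix (Fin d) (Fin d) ℝ) (u v : ℝ → (Fin d → ℝ)) : ℝ :=
  (1 / 2) * ∫ t in (0 : ℝ)..(2 * π), (∫ τ in (0 : ℝ)..t, u τ) ⬝ᵥ A.mulVec (v t)

/-- The element of the wave-number-`k` subspace `T_k = ℝ^d ⊗ span{cos kt, sin kt}` with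
coordinates `(X, Y)` in the orthonormal basis `{eᵢ (1/√π) cos kt, eᵢ (1/√π) sin kt}`. -/
noncomputable def waveFn {d : ℕ} (k : ℕ) (X Y : Fin d → ℝ) : ℝ → (Fin d → ℝ) :=
  fun t => (Real.sqrt π)⁻¹ • (Real.cos (k * t) • X + Real.sin (k * t) • Y)

lemma int_cos_freq (c : ℝ) (hc : c ≠ 0) (a b : ℝ) :
    ∫ x in a..b, Real.cos (c * x) = (Real.sin (c * b) - Real.sin (c * a)) / c := by
  rw [intervalIntegral.integral_comp_mul_left _ hc, integral_cos, smul_eq_mul]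
  field_simp

lemma int_sin_freq (c : ℝ) (hc : c ≠ 0) (a b : ℝ) :
    ∫ x in a..b, Real.sin (c * x) = (Real.cos (c * a) - Real.cos (c * b)) / c := by
  rw [intervalIntegral.integral_comp_mul_left _ hc, integral_sin, smul_eq_mul]
  field_simp

lemma Ic (c : ℝ) (h : ∃ n : ℤ, c = n) :
    ∫ t in (0:ℝ)..(2*π), Real.cos (c * t) = if c = 0 then 2*π else 0 := by
  obtain ⟨n, rfl⟩ := h
  rcases eq_or_ne (n:ℝ) 0 with h0 | h0
  · simp [h0]
  · rw [int_cos_freq _ h0, if_neg h0]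
    have h1 : ((n:ℝ) * (2*π)) = (2*n : ℤ) * π := by push_cast; ring
    rw [h1, Real.sin_int_mul_pi]
    simp

lemma Is (c : ℝ) (h : ∃ n : ℤ, c = n) :
    ∫ t in (0:ℝ)..(2*π), Real.sin (c * t) = 0 := by
  obtain ⟨n, rfl⟩ := h
  rcases eq_or_ne (n:ℝ) 0 with h0 | h0
  · simp [h0]
  · rw [int_sin_freq _ h0]
    have h1 : ((n:ℝ) * (2*π)) = (n : ℤ) * (2*π) := by norm_num
    rw [h1, Real.cos_int_mul_two_pi]
    simp

lemma Tc (n : ℕ) (hn : 1 ≤ n) : ∫ t in (0:ℝ)..(2*π), Real.cos ((n:ℝ)*t) = 0 := by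
  rw [Ic _ ⟨n, by norm_num⟩, if_neg (by exact_mod_cast by omega : ((n:ℝ) ≠ 0))]

lemma Ts (n : ℕ) : ∫ t in (0:ℝ)..(2*π), Real.sin ((n:ℝ)*t) = 0 :=
  Is _ ⟨n, by norm_num⟩

lemma Tsc (m n : ℕ) :
    ∫ t in (0:ℝ)..(2*π), Real.sin (m*t) * Real.cos (n*t) = 0 := by
  have key : ∀ t : ℝ, Real.sin (m*t) * Real.cos (n*t)
      = (Real.sin (((m:ℝ)+n)*t) + Real.sin (((m:ℝ)-n)*t))/2 := by
    intro t
    rw [show ((m:ℝ)+n)*t = m*t + n*t by ring, show ((m:ℝ)-n)*t = m*t - n*t by ring,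
      Real.sin_add, Real.sin_sub]
    ring
  rw [intervalIntegral.integral_congr (fun t _ => key t), intervalIntegral.integral_div,
    intervalIntegral.integral_add
      ((Continuous.intervalIntegrable (by fun_prop) _ _))
      ((Continuous.intervalIntegrable (by fun_prop) _ _)),
    Is _ ⟨(m:ℤ)+n, by push_cast; ring⟩, Is _ ⟨(m:ℤ)-n, by push_cast; ring⟩]
  norm_num

lemma Tcs (m n : ℕ) :
    ∫ t in (0:ℝ)..(2*π), Real.cos (m*t) * Real.sin (n*t) = 0 := by
  rw [intervalIntegral.integral_congr (fun t _ => mul_comm _ _)]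
  exact Tsc n m

lemma Tss (m n : ℕ) (hm : 1 ≤ m) (hn : 1 ≤ n) :
    ∫ t in (0:ℝ)..(2*π), Real.sin (m*t) * Real.sin (n*t)
      = if m = n then π else 0 := by
  have key : ∀ t : ℝ, Real.sin (m*t) * Real.sin (n*t)
      = (Real.cos (((m:ℝ)-n)*t) - Real.cos (((m:ℝ)+n)*t))/2 := by
    intro t
    rw [show ((m:ℝ)+n)*t = m*t + n*t by ring, show ((m:ℝ)-n)*t = m*t - n*t by ring,
      Real.cos_add, Real.cos_sub]
    ring
  rw [intervalIntegral.integral_congr (fun t _ => key t), intervalIntegral.integral_div,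
    intervalIntegral.integral_sub
      ((Continuous.intervalIntegrable (by fun_prop) _ _))
      ((Continuous.intervalIntegrable (by fun_prop) _ _)),
    Ic _ ⟨(m:ℤ)-n, by push_cast; ring⟩, Ic _ ⟨(m:ℤ)+n, by push_cast; ring⟩]
  have h2 : ((m:ℝ) + n) ≠ 0 := by positivity
  rw [if_neg h2]
  rcases eq_or_ne m n with h | h
  · rw [if_pos (by rw [h]; ring), if_pos h]; ring
  · rw [if_neg (by intro hc; exact h (by exact_mod_cast sub_eq_zero.mp hc)), if_neg h]
    ring

lemma Tcc (m n : ℕ) (hm : 1 ≤ m) (hn : 1 ≤ n) :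
    ∫ t in (0:ℝ)..(2*π), Real.cos (m*t) * Real.cos (n*t)
      = if m = n then π else 0 := by
  have key : ∀ t : ℝ, Real.cos (m*t) * Real.cos (n*t)
      = (Real.cos (((m:ℝ)-n)*t) + Real.cos (((m:ℝ)+n)*t))/2 := by
    intro t
    rw [show ((m:ℝ)+n)*t = m*t + n*t by ring, show ((m:ℝ)-n)*t = m*t - n*t by ring,
      Real.cos_add, Real.cos_sub]
    ring
  rw [intervalIntegral.integral_congr (fun t _ => key t), intervalIntegral.integral_div,
    intervalIntegral.integral_add
      ((Continuous.intervalIntegrable (by fun_prop) _ _))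
      ((Continuous.intervalIntegrable (by fun_prop) _ _)),
    Ic _ ⟨(m:ℤ)-n, by push_cast; ring⟩, Ic _ ⟨(m:ℤ)+n, by push_cast; ring⟩]
  have h2 : ((m:ℝ) + n) ≠ 0 := by positivity
  rw [if_neg h2]
  rcases eq_or_ne m n with h | h
  · rw [if_pos (by rw [h]; ring), if_pos h]; ring
  · rw [if_neg (by intro hc; exact h (by exact_mod_cast sub_eq_zero.mp hc)), if_neg h]
    ring

lemma inner_int {d : ℕ} (k : ℕ) (hk : 1 ≤ k) (X Y : Fin d → ℝ) (t : ℝ) :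
    (∫ τ in (0:ℝ)..t, waveFn k X Y τ) =
      (Real.sqrt π)⁻¹ • ((Real.sin (k*t)/k) • X + ((1 - Real.cos (k*t))/k) • Y) := by
  have hk0 : (k:ℝ) ≠ 0 := Nat.cast_ne_zero.mpr (by omega)
  unfold waveFn
  rw [intervalIntegral.integral_smul]
  congr 1
  rw [intervalIntegral.integral_add
      ((Continuous.intervalIntegrable (by fun_prop) _ _))
      ((Continuous.intervalIntegrable (by fun_prop) _ _)),
    intervalIntegral.integral_smul_const, intervalIntegral.integral_smul_const,
    int_cos_freq _ hk0, int_sin_freq _ hk0]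
  norm_num

lemma dot_expand {d : ℕ} (A : Matrix (Fin d) (Fin d) ℝ) (s a b c e : ℝ)
    (X Y X' Y' : Fin d → ℝ) :
    (s • (a • X + b • Y)) ⬝ᵥ A.mulVec (s • (c • X' + e • Y')) =
      (s*s) * (a*c*(X ⬝ᵥ A.mulVec X') + a*e*(X ⬝ᵥ A.mulVec Y')
        + b*c*(Y ⬝ᵥ A.mulVec X') + b*e*(Y ⬝ᵥ A.mulVec Y')) := by
  simp only [Matrix.mulVec_add, Matrix.mulVec_smul, dotProduct_add, add_dotProduct,
    smul_dotProduct, dotProduct_smul, smul_eq_mul, smul_add, smul_smul]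
  ring

lemma qval {d : ℕ} (A : Matrix (Fin d) (Fin d) ℝ) (k j : ℕ) (hk : 1 ≤ k) (hj : 1 ≤ j)
    (X Y X' Y' : Fin d → ℝ) :
    qForm A (waveFn k X Y) (waveFn j X' Y') =
      if j = k then (2*(k:ℝ))⁻¹ * (X ⬝ᵥ A.mulVec Y' - Y ⬝ᵥ A.mulVec X') else 0 := by
  have hk0 : (k:ℝ) ≠ 0 := Nat.cast_ne_zero.mpr (by omega)
  have key : ∀ t ∈ Set.uIcc (0:ℝ) (2*π),
      (∫ τ in (0:ℝ)..t, waveFn k X Y τ) ⬝ᵥ A.mulVec (waveFn j X' Y' t)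
        = π⁻¹ * (k:ℝ)⁻¹ *
          (Real.sin (k*t) * Real.cos (j*t) * (X ⬝ᵥ A.mulVec X')
          + Real.sin (k*t) * Real.sin (j*t) * (X ⬝ᵥ A.mulVec Y')
          + (Real.cos (j*t) - Real.cos (k*t) * Real.cos (j*t)) * (Y ⬝ᵥ A.mulVec X')
          + (Real.sin (j*t) - Real.cos (k*t) * Real.sin (j*t)) * (Y ⬝ᵥ A.mulVec Y')) := by
    intro t _
    rw [inner_int k hk X Y t, show waveFn j X' Y' t
        = (Real.sqrt π)⁻¹ • (Real.cos (j*t) • X' + Real.sin (j*t) • Y') from rfl,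
      dot_expand, show (Real.sqrt π)⁻¹ * (Real.sqrt π)⁻¹ = π⁻¹ by
        rw [← mul_inv, Real.mul_self_sqrt Real.pi_pos.le]]
    field_simp
  unfold qForm
  rw [intervalIntegral.integral_congr key, intervalIntegral.integral_const_mul,
    intervalIntegral.integral_add
      (((Continuous.intervalIntegrable (by fun_prop) _ _)))
      (((Continuous.intervalIntegrable (by fun_prop) _ _))),
    intervalIntegral.integral_add
      (((Continuous.intervalIntegrable (by fun_prop) _ _)))
      (((Continuous.intervalIntegrable (by fun_prop) _ _))),
    intervalIntegral.integral_add
      (((Continuous.intervalIntegrable (by fun_prop) _ _)))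
      (((Continuous.intervalIntegrable (by fun_prop) _ _))),
    intervalIntegral.integral_mul_const, intervalIntegral.integral_mul_const,
    intervalIntegral.integral_mul_const, intervalIntegral.integral_mul_const,
    Tsc k j, Tss k j hk hj]
  have h3 : ∫ t in (0:ℝ)..(2*π), (Real.cos (j*t) - Real.cos (k*t) * Real.cos (j*t))
      = -(if k = j then π else 0) := by
    rw [intervalIntegral.integral_sub
        ((Continuous.intervalIntegrable (by fun_prop) _ _))
        ((Continuous.intervalIntegrable (by fun_prop) _ _)),
      Tc j hj, Tcc k j hk hj]
    ring
  have h4 : ∫ t in (0:ℝ)..(2*π), (Real.sin (j*t) - Real.cos (k*t) * Real.sin (j*t)) = 0 := by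
    rw [intervalIntegral.integral_sub
        ((Continuous.intervalIntegrable (by fun_prop) _ _))
        ((Continuous.intervalIntegrable (by fun_prop) _ _)),
      Ts j, Tcs k j]
    ring
  rw [h3, h4]
  rcases eq_or_ne j k with h | h
  · subst h
    rw [if_pos rfl, if_pos rfl]
    have : π ≠ 0 := Real.pi_ne_zero
    field_simp
    ring
  · rw [if_neg (fun hc => h hc.symm), if_neg h]
    ring

/-- Each subspace `T_k` is invariant under the operator `Q` associated to `q` (equivalently,
`T_k ⊥ T_j` for `q` when `j ≠ k`), and in the orthonormal basis
`{eᵢ (1/√π) cos kt, eᵢ (1/√π) sin kt}` the matrix of `Q|_{T_k}` is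
`(1/k)·[[0, A/2], [-A/2, 0]]`. -/
theorem stmt_4 {d : ℕ} (A : Matrix (Fin d) (Fin d) ℝ) (hA : Aᵀ = -A)
    (k j : ℕ) (hk : 1 ≤ k) (hj : 1 ≤ j)
    (X Y X' Y' : Fin d → ℝ) :
    (j ≠ k → qForm A (waveFn k X Y) (waveFn j X' Y') = 0) ∧
    qForm A (waveFn k X Y) (waveFn k X' Y') =
      Sum.elim X Y ⬝ᵥ
        ((k : ℝ)⁻¹ •
          Matrix.fromBlocks 0 ((1 / 2 : ℝ) • A) (-((1 / 2 : ℝ) • A)) 0).mulVec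
          (Sum.elim X' Y') := by
  have hk0 : (k:ℝ) ≠ 0 := Nat.cast_ne_zero.mpr (by omega)
  constructor
  · intro hjk
    rw [qval A k j hk hj, if_neg hjk]
  · rw [qval A k k hk hk, if_pos rfl, Matrix.smul_mulVec, Matrix.fromBlocks_mulVec]
    simp only [Sum.elim_comp_inl, Sum.elim_comp_inr, Matrix.zero_mulVec, Matrix.neg_mulVec,
      Matrix.smul_mulVec, zero_add, add_zero, sumElim_dotProduct_sumElim,
      dotProduct_smul, dotProduct_neg, smul_eq_mul, Pi.smul_apply]
    field_simp
    ring
end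

section
/- Let q be a nondegenerate quadratic form on ℝ^{n+1} with negative inertia index i⁻(q) = i, where 1 ≤ i ≤ n. Then the set Y = {x ∈ S^n : q(x) = 0} is homeomorphic to S^{i-1} × S^{n-i}. -/
noncomputable section S13

variable (n i : ℕ)

/-- first block of coordinates -/
def s13a (y : EuclideanSpace ℝ (Fin (n + 1))) : EuclideanSpace ℝ (Fin (n - i + 1)) :=
  WithLp.toLp 2 fun k => y ⟨(k : ℕ), by have := k.isLt; omega⟩

/-- last `i` coordinates -/
def s13b (y : EuclideanSpace ℝ (Fin (n + 1))) (hin : i ≤ n) : EuclideanSpace ℝ (Fin i) :=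
  WithLp.toLp 2 fun k => y ⟨n - i + 1 + (k : ℕ), by have := k.isLt; omega⟩

/-- assemble -/
def s13j (u : EuclideanSpace ℝ (Fin i)) (v : EuclideanSpace ℝ (Fin (n - i + 1)))
    (hin : i ≤ n) : EuclideanSpace ℝ (Fin (n + 1)) :=
  WithLp.toLp 2 fun j => if h : (j : ℕ) < n - i + 1 then v ⟨(j : ℕ), h⟩
    else u ⟨(j : ℕ) - (n - i + 1), by have := j.isLt; omega⟩

variable (hin : i ≤ n)

theorem s13a_j (u v) : s13a n i (s13j n i u v hin) = v := by
  ext k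
  simp [s13a, s13j, k.isLt]
  exact fun h => absurd k.isLt (by omega)

theorem s13b_j (u v) : s13b n i (s13j n i u v hin) hin = u := by
  ext k
  have hk := k.isLt
  simp only [s13b, s13j, PiLp.toLp_apply]
  rw [dif_neg (by omega)]
  refine congrArg u.ofLp ?_
  exact Fin.ext (by simp)

theorem s13j_ab (y) : s13j n i (s13b n i y hin) (s13a n i y) hin = y := by
  ext j
  have hj := j.isLt
  simp only [s13j, s13a, s13b, PiLp.toLp_apply]
  split_ifs with h
  · congr 1
  · refine congrArg y.ofLp ?_; exact Fin.ext (by simp; omega)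

theorem s13a_smul (c : ℝ) (y) : s13a n i (c • y) = c • s13a n i y := rfl
theorem s13b_smul (c : ℝ) (y) : s13b n i (c • y) hin = c • s13b n i y hin := rfl
theorem s13j_smul (c : ℝ) (u v) : s13j n i (c • u) (c • v) hin = c • s13j n i u v hin := by
  ext j
  simp only [s13j, PiLp.smul_apply, smul_eq_mul]
  split_ifs <;> rfl

theorem s13sum_split (g : Fin (n + 1) → ℝ) :
    ∑ j, g j = (∑ k : Fin (n - i + 1), g ⟨(k : ℕ), by have := k.isLt; omega⟩)
      + ∑ k : Fin i, g ⟨n - i + 1 + (k : ℕ), by have := k.isLt; omega⟩ := by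
  have h : n + 1 = (n - i + 1) + i := by omega
  rw [Fintype.sum_equiv (finCongr h) g (fun j => g ((finCongr h).symm j)) (by simp)]
  rw [Fin.sum_univ_add]
  congr 1 <;> refine Finset.sum_congr rfl fun k _ => congrArg g (Fin.ext ?_) <;> simp


theorem euc_norm_sq {k : ℕ} (v : EuclideanSpace ℝ (Fin k)) : ‖v‖ ^ 2 = ∑ j, (v j) ^ 2 := by
  rw [EuclideanSpace.norm_eq, Real.sq_sqrt (by positivity)]
  simp [sq_abs]

theorem s13norm_split (y : EuclideanSpace ℝ (Fin (n + 1))) :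
    ‖y‖ ^ 2 = ‖s13a n i y‖ ^ 2 + ‖s13b n i y hin‖ ^ 2 := by
  rw [euc_norm_sq, euc_norm_sq, euc_norm_sq, s13sum_split n i hin (fun j => (y j) ^ 2)]
  rfl

theorem s13Q (y : EuclideanSpace ℝ (Fin (n + 1))) :
    QuadraticMap.weightedSumSquares ℝ
        (fun j : Fin (n + 1) => if (j : ℕ) < n + 1 - i then (1 : ℝ) else -1) y
      = ‖s13a n i y‖ ^ 2 - ‖s13b n i y hin‖ ^ 2 := by
  rw [euc_norm_sq, euc_norm_sq, QuadraticMap.weightedSumSquares_apply,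
    s13sum_split n i hin (fun j => (if (j : ℕ) < n + 1 - i then (1 : ℝ) else -1) • (y j * y j))]
  rw [sub_eq_add_neg (G := ℝ)]
  congr 1
  · refine Finset.sum_congr rfl fun k _ => ?_
    have hk := k.isLt
    rw [if_pos (show ((⟨(k : ℕ), by omega⟩ : Fin (n + 1)) : ℕ) < n + 1 - i by simp; omega)]
    simp [s13a, sq]
  · rw [← Finset.sum_neg_distrib]
    refine Finset.sum_congr rfl fun k _ => ?_
    rw [if_neg (show ¬ ((⟨n - i + 1 + (k : ℕ), by have := k.isLt; omega⟩ : Fin (n + 1)) : ℕ) < n + 1 - i by simp; omega)]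
    simp [s13b, sq]


theorem s13j_add (u u' v v') :
    s13j n i (u + u') (v + v') hin = s13j n i u v hin + s13j n i u' v' hin := by
  ext j
  simp only [s13j, PiLp.add_apply]
  split_ifs <;> simp

def s13aL : EuclideanSpace ℝ (Fin (n + 1)) →ₗ[ℝ] EuclideanSpace ℝ (Fin (n - i + 1)) where
  toFun := s13a n i
  map_add' _ _ := rfl
  map_smul' _ _ := rfl

def s13bL : EuclideanSpace ℝ (Fin (n + 1)) →ₗ[ℝ] EuclideanSpace ℝ (Fin i) where
  toFun y := s13b n i y hin
  map_add' _ _ := rfl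
  map_smul' _ _ := rfl

def s13jL : (EuclideanSpace ℝ (Fin i) × EuclideanSpace ℝ (Fin (n - i + 1))) →ₗ[ℝ]
    EuclideanSpace ℝ (Fin (n + 1)) where
  toFun p := s13j n i p.1 p.2 hin
  map_add' p p' := s13j_add n i hin _ _ _ _
  map_smul' c p := (s13j_smul n i hin c p.1 p.2).symm ▸ rfl

theorem s13a_cont : Continuous (s13a n i) :=
  (s13aL n i).continuous_of_finiteDimensional

theorem s13b_cont : Continuous (fun y => s13b n i y hin) :=
  (s13bL n i hin).continuous_of_finiteDimensional

theorem s13j_cont : Continuous (fun p : EuclideanSpace ℝ (Fin i) × EuclideanSpace ℝ (Fin (n - i + 1)) => s13j n i p.1 p.2 hin) :=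
  (s13jL n i hin).continuous_of_finiteDimensional

end S13

/-- Let `q` be a nondegenerate quadratic form on `ℝ^{n+1}` with negative inertia index `i`
(encoded, via Sylvester's law, as equivalence with the weighted sum of squares having
`n+1-i` weights `+1` and `i` weights `-1`), with `1 ≤ i ≤ n`. Then
`Y = {x ∈ Sⁿ : q(x) = 0}` is homeomorphic to `S^{i-1} × S^{n-i}`. -/
theorem stmt_13 (n i : ℕ) (hi1 : 1 ≤ i) (hin : i ≤ n)
    (q : QuadraticForm ℝ (EuclideanSpace ℝ (Fin (n + 1))))
    (hq : QuadraticMap.Equivalent q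
      (QuadraticMap.weightedSumSquares ℝ
        (fun j : Fin (n + 1) => if (j : ℕ) < n + 1 - i then (1 : ℝ) else -1))) :
    Nonempty
      ({x : EuclideanSpace ℝ (Fin (n + 1)) // ‖x‖ = 1 ∧ q x = 0} ≃ₜ
        (Metric.sphere (0 : EuclideanSpace ℝ (Fin i)) 1 ×
          Metric.sphere (0 : EuclideanSpace ℝ (Fin (n - i + 1))) 1)) := by
  obtain ⟨e⟩ := hq
  have hQ : ∀ y : EuclideanSpace ℝ (Fin (n + 1)), QuadraticMap.weightedSumSquares ℝ
      (fun j : Fin (n + 1) => if (j : ℕ) < n + 1 - i then (1 : ℝ) else -1) y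
      = ‖s13a n i y‖ ^ 2 - ‖s13b n i y hin‖ ^ 2 := s13Q n i hin
  set f := e.toLinearEquiv.trans (WithLp.linearEquiv 2 ℝ (Fin (n + 1) → ℝ)).symm with hf
  have hqQ : ∀ x, QuadraticMap.weightedSumSquares ℝ
      (fun j : Fin (n + 1) => if (j : ℕ) < n + 1 - i then (1 : ℝ) else -1) (f x) = q x :=
    fun x => e.map_app x
  have hfc : Continuous f := f.toLinearMap.continuous_of_finiteDimensional
  have hfsc : Continuous f.symm := f.symm.toLinearMap.continuous_of_finiteDimensional
  -- key facts about points of Y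
  have key : ∀ x : EuclideanSpace ℝ (Fin (n + 1)), ‖x‖ = 1 → q x = 0 →
      ‖s13a n i (f x)‖ = ‖s13b n i (f x) hin‖ ∧ s13b n i (f x) hin ≠ 0 ∧
        s13a n i (f x) ≠ 0 := by
    intro x hx1 hx0
    have h1 : QuadraticMap.weightedSumSquares ℝ
        (fun j : Fin (n + 1) => if (j : ℕ) < n + 1 - i then (1 : ℝ) else -1) (f x) = 0 := by
      rw [hqQ x, hx0]
    have h2 : ‖s13a n i (f x)‖ ^ 2 = ‖s13b n i (f x) hin‖ ^ 2 := by
      have h3 := hQ (f x); rw [h1] at h3; linarith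
    have heq : ‖s13a n i (f x)‖ = ‖s13b n i (f x) hin‖ := by
      nlinarith [norm_nonneg (s13a n i (f x)), norm_nonneg (s13b n i (f x) hin)]
    have hx0' : x ≠ 0 := by
      intro h; rw [h, norm_zero] at hx1; exact zero_ne_one hx1
    have hfx : f x ≠ 0 := fun h => hx0' (f.map_eq_zero_iff.mp h)
    have hb : s13b n i (f x) hin ≠ 0 := by
      intro hb0
      have ha0 : s13a n i (f x) = 0 := by
        rw [hb0, norm_zero] at heq; exact norm_eq_zero.mp heq
      apply hfx
      have hj := s13j_ab n i hin (f x)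
      rw [hb0, ha0] at hj
      rw [← hj]
      ext j
      simp only [s13j]
      split_ifs <;> rfl
    have ha : s13a n i (f x) ≠ 0 := by
      intro ha0
      rw [ha0, norm_zero] at heq
      exact hb (norm_eq_zero.mp heq.symm)
    exact ⟨heq, hb, ha⟩
  have memu : ∀ x, ‖x‖ = 1 → q x = 0 →
      ‖‖s13b n i (f x) hin‖⁻¹ • s13b n i (f x) hin‖ = 1 :=
    fun x h1 h0 => norm_smul_inv_norm (key x h1 h0).2.1
  have memv : ∀ x, ‖x‖ = 1 → q x = 0 →
      ‖‖s13b n i (f x) hin‖⁻¹ • s13a n i (f x)‖ = 1 := by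
    intro x h1 h0
    obtain ⟨heq, hb, ha⟩ := key x h1 h0
    rw [← heq]
    exact norm_smul_inv_norm ha
  have hwne : ∀ (u : EuclideanSpace ℝ (Fin i)) (v : EuclideanSpace ℝ (Fin (n - i + 1))),
      ‖v‖ = 1 → f.symm (s13j n i u v hin) ≠ 0 := by
    intro u v hv h
    have hj0 : s13j n i u v hin = 0 := f.symm.map_eq_zero_iff.mp h
    have : v = 0 := by
      have := s13a_j n i hin u v
      rw [hj0] at this
      rw [← this]
      rfl
    rw [this, norm_zero] at hv; exact zero_ne_one hv
  have Gmem : ∀ (u : EuclideanSpace ℝ (Fin i)) (v : EuclideanSpace ℝ (Fin (n - i + 1))),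
      ‖u‖ = 1 → ‖v‖ = 1 →
      ‖(‖f.symm (s13j n i u v hin)‖⁻¹ • f.symm (s13j n i u v hin))‖ = 1 ∧
        q (‖f.symm (s13j n i u v hin)‖⁻¹ • f.symm (s13j n i u v hin)) = 0 := by
    intro u v hu hv
    have hw := hwne u v hv
    refine ⟨norm_smul_inv_norm hw, ?_⟩
    rw [← hqQ, map_smul, f.apply_symm_apply, WithLp.ofLp_smul, QuadraticMap.map_smul, hQ,
      s13a_j, s13b_j, hu, hv]
    simp
  refine ⟨{
      toFun := fun x =>
        (⟨‖s13b n i (f x.1) hin‖⁻¹ • s13b n i (f x.1) hin,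
            mem_sphere_zero_iff_norm.mpr (memu x.1 x.2.1 x.2.2)⟩,
         ⟨‖s13b n i (f x.1) hin‖⁻¹ • s13a n i (f x.1),
            mem_sphere_zero_iff_norm.mpr (memv x.1 x.2.1 x.2.2)⟩),
      invFun := fun p =>
        ⟨‖f.symm (s13j n i p.1.1 p.2.1 hin)‖⁻¹ • f.symm (s13j n i p.1.1 p.2.1 hin),
          (Gmem p.1.1 p.2.1 (mem_sphere_zero_iff_norm.mp p.1.2)
            (mem_sphere_zero_iff_norm.mp p.2.2)).1,
          (Gmem p.1.1 p.2.1 (mem_sphere_zero_iff_norm.mp p.1.2)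
            (mem_sphere_zero_iff_norm.mp p.2.2)).2⟩,
      left_inv := ?_, right_inv := ?_,
      continuous_toFun := ?_, continuous_invFun := ?_ }⟩
  · -- left_inv
    rintro ⟨x, hx1, hx0⟩
    obtain ⟨heq, hb, ha⟩ := key x hx1 hx0
    have hcpos : (0 : ℝ) < ‖s13b n i (f x) hin‖ := norm_pos_iff.mpr hb
    apply Subtype.ext
    simp only
    rw [s13j_smul, s13j_ab, map_smul, f.symm_apply_apply, norm_smul, hx1, mul_one,
      norm_inv, norm_norm, inv_inv, smul_smul,
      mul_inv_cancel₀ (ne_of_gt hcpos), one_smul]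
  · -- right_inv
    rintro ⟨⟨u, hu⟩, ⟨v, hv⟩⟩
    rw [mem_sphere_zero_iff_norm] at hu hv
    have hw := hwne u v hv
    have hcpos : (0 : ℝ) < ‖f.symm (s13j n i u v hin)‖ := norm_pos_iff.mpr hw
    have hfx : f (‖f.symm (s13j n i u v hin)‖⁻¹ • f.symm (s13j n i u v hin))
        = ‖f.symm (s13j n i u v hin)‖⁻¹ • s13j n i u v hin := by
      rw [map_smul, f.apply_symm_apply]
    have hcinv : ‖(‖f.symm (s13j n i u v hin)‖⁻¹ : ℝ)‖ = ‖f.symm (s13j n i u v hin)‖⁻¹ := by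
      rw [norm_inv, norm_norm]
    refine Prod.ext (Subtype.ext ?_) (Subtype.ext ?_)
    · simp only
      rw [hfx, s13b_smul, s13b_j, norm_smul, hu, mul_one, hcinv, inv_inv, smul_smul,
        mul_inv_cancel₀ (ne_of_gt hcpos), one_smul]
    · simp only
      rw [hfx, s13b_smul, s13b_j, s13a_smul, s13a_j, norm_smul, hu, mul_one, hcinv,
        inv_inv, smul_smul, mul_inv_cancel₀ (ne_of_gt hcpos), one_smul]
  · -- continuity of toFun
    have base : Continuous fun x : {x : EuclideanSpace ℝ (Fin (n + 1)) // ‖x‖ = 1 ∧ q x = 0} =>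
        f x.1 := hfc.comp continuous_subtype_val
    have cb : Continuous fun x : {x : EuclideanSpace ℝ (Fin (n + 1)) // ‖x‖ = 1 ∧ q x = 0} =>
        s13b n i (f x.1) hin := (s13b_cont n i hin).comp base
    have ca : Continuous fun x : {x : EuclideanSpace ℝ (Fin (n + 1)) // ‖x‖ = 1 ∧ q x = 0} =>
        s13a n i (f x.1) := (s13a_cont n i).comp base
    have cdi : Continuous fun x : {x : EuclideanSpace ℝ (Fin (n + 1)) // ‖x‖ = 1 ∧ q x = 0} =>
        (‖s13b n i (f x.1) hin‖)⁻¹ :=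
      (cb.norm).inv₀ fun x => norm_ne_zero_iff.mpr (key x.1 x.2.1 x.2.2).2.1
    exact ((cdi.smul cb).subtype_mk _).prodMk ((cdi.smul ca).subtype_mk _)
  · -- continuity of invFun
    have cpair : Continuous fun p : (Metric.sphere (0 : EuclideanSpace ℝ (Fin i)) 1 ×
        Metric.sphere (0 : EuclideanSpace ℝ (Fin (n - i + 1))) 1) =>
        ((p.1.1, p.2.1) : EuclideanSpace ℝ (Fin i) × EuclideanSpace ℝ (Fin (n - i + 1))) :=
      (continuous_subtype_val.comp continuous_fst).prodMk
        (continuous_subtype_val.comp continuous_snd)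
    have cw : Continuous fun p : (Metric.sphere (0 : EuclideanSpace ℝ (Fin i)) 1 ×
        Metric.sphere (0 : EuclideanSpace ℝ (Fin (n - i + 1))) 1) =>
        f.symm (s13j n i p.1.1 p.2.1 hin) :=
      hfsc.comp ((s13j_cont n i hin).comp cpair)
    have cwi : Continuous fun p : (Metric.sphere (0 : EuclideanSpace ℝ (Fin i)) 1 ×
        Metric.sphere (0 : EuclideanSpace ℝ (Fin (n - i + 1))) 1) =>
        (‖f.symm (s13j n i p.1.1 p.2.1 hin)‖)⁻¹ :=
      (cw.norm).inv₀ fun p => norm_ne_zero_iff.mpr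
        (hwne p.1.1 p.2.1 (mem_sphere_zero_iff_norm.mp p.2.2))
    exact (cwi.smul cw).subtype_mk _
end
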